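/- Let G : 2^{V∪V̄} → ℝ be submodular, non-negative, with G(∅) = 0, G(V∪V̄) = 0, and min_{T⊆V̄} G(T) = 0. Define F(S) = min_{T⊆V̄} G(S∪T) for S ⊆ V. Then the Lovász extension f of F satisfies f(x) = min_{x̄ ∈ ℝ^M} g(x, x̄) for ALL x ∈ ℝ^N (not only non-negative x), where g is the Lovász extension of G. -/

import Mathlib

open scoped Classical
open MeasureTheory

/-- The Lovász extension of a set function `F` (with `F ∅ = 0`), defined equivalently to the
sorted telescoping sum via the level-set integral formula. -/
noncomputable def lovasz {α : Type*} [Fintype α] (F : Set α → ℝ) (x : α → ℝ) : ℝ :=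
  (⨅ i, x i) * F Set.univ +
    ∫ t in Set.Ioc (⨅ i, x i) (⨆ i, x i), F {i | t < x i}

/-- `F(S₁) + F(S₂) ≥ F(S₁ ∪ S₂) + F(S₁ ∩ S₂)`. -/
def Submodular {α : Type*} (F : Set α → ℝ) : Prop :=
  ∀ A B : Set α, F (A ∪ B) + F (A ∩ B) ≤ F A + F B

section Aux

set_option linter.unusedSectionVars false

variable {α β : Type*} [Fintype α] [Fintype β]

/-- The "concatenated" subset of `α ⊕ β` determined by `S ⊆ α` and `T ⊆ β`. -/
def LLev (S : Set α) (T : Set β) : Set (α ⊕ β) := Sum.inl '' S ∪ Sum.inr '' T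

lemma LLev_union (S S' : Set α) (T T' : Set β) :
    LLev S T ∪ LLev S' T' = LLev (S ∪ S') (T ∪ T') := by
  simp only [LLev, Set.image_union]
  ext (i | j) <;> simp <;> tauto

lemma LLev_inter (S S' : Set α) (T T' : Set β) :
    LLev S T ∩ LLev S' T' = LLev (S ∩ S') (T ∩ T') := by
  ext (i | j) <;> simp [LLev] <;> tauto

lemma LLev_univ : LLev (Set.univ : Set α) (Set.univ : Set β) = Set.univ := by
  ext (i | j) <;> simp [LLev]

lemma level_elim (x : α → ℝ) (xb : β → ℝ) (t : ℝ) :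
    {i | t < Sum.elim x xb i} = LLev {i | t < x i} {j | t < xb j} := by
  ext (i | j) <;> simp [LLev]

/-- Measurability of the level-set integrand. -/
lemma level_measurable {γ : Type*} [Fintype γ] (H : Set γ → ℝ) (y : γ → ℝ) :
    Measurable fun t : ℝ => H {i | t < y i} := by
  have h1 : (fun t : ℝ => H {i | t < y i})
      = fun t => ∑ S : Set γ, if {i | t < y i} = S then H S else 0 := by
    funext t
    rw [Finset.sum_ite_eq Finset.univ ({i | t < y i}) H]
    simp
  rw [h1]
  refine Finset.measurable_sum _ fun S _ => ?_
  have h2 : MeasurableSet {t : ℝ | {i | t < y i} = S} := by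
    have he : {t : ℝ | {i | t < y i} = S}
        = ⋂ i, (if i ∈ S then Set.Iio (y i) else Set.Ici (y i)) := by
      ext t
      simp only [Set.mem_setOf_eq, Set.ext_iff, Set.mem_iInter]
      refine forall_congr' fun i => ?_
      by_cases h : i ∈ S <;> simp [h, Set.mem_Iio, Set.mem_Ici, not_lt]
    rw [he]
    exact MeasurableSet.iInter fun i => by
      split_ifs <;> [exact measurableSet_Iio; exact measurableSet_Ici]
  have h3 : (fun t : ℝ => if {i | t < y i} = S then H S else 0)
      = Set.indicator {t : ℝ | {i | t < y i} = S} fun _ => H S := by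
    funext t; simp [Set.indicator_apply]
  rw [h3]
  exact measurable_const.indicator h2

/-- Integrability of the level-set integrand on bounded intervals. -/
lemma level_integrableOn {γ : Type*} [Fintype γ] (H : Set γ → ℝ) (y : γ → ℝ) (c d : ℝ) :
    MeasureTheory.IntegrableOn (fun t : ℝ => H {i | t < y i}) (Set.Ioc c d) := by
  apply MeasureTheory.Measure.integrableOn_of_bounded (M := ∑ S : Set γ, |H S|)
      measure_Ioc_lt_top.ne (level_measurable H y).aestronglyMeasurable
  filter_upwards with t
  calc ‖H {i | t < y i}‖ = |H {i | t < y i}| := rfl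
    _ ≤ ∑ S : Set γ, |H S| :=
      Finset.single_le_sum (fun S _ => abs_nonneg (H S)) (Finset.mem_univ _)

variable (G : Set (α ⊕ β) → ℝ)

/-- `F(S) = min_{T ⊆ V̄} G(S ∪ T)`. -/
noncomputable def FF (S : Set α) : ℝ := ⨅ T : Set β, G (Sum.inl '' S ∪ Sum.inr '' T)

lemma FF_le (hGnn : ∀ S, 0 ≤ G S) (S : Set α) (T : Set β) : FF G S ≤ G (LLev S T) :=
  ciInf_le ⟨0, by rintro _ ⟨T', rfl⟩; exact hGnn _⟩ T

lemma FF_nonneg (hGnn : ∀ S, 0 ≤ G S) (S : Set α) : 0 ≤ FF G S :=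
  le_ciInf fun _ => hGnn _

/-- The finite set of minimizers `T` of `G(S ∪ T)`. -/
noncomputable def mzF (S : Set α) : Finset (Set β) :=
  Finset.univ.filter fun T => G (LLev S T) = FF G S

lemma mzF_nonempty (S : Set α) : (mzF G S).Nonempty := by
  obtain ⟨T, hT⟩ := exists_eq_ciInf_of_finite (f := fun T : Set β => G (LLev S T))
  exact ⟨T, by simp only [mzF, Finset.mem_filter, Finset.mem_univ, true_and]; exact hT⟩

lemma inter_mem_mz (hG : Submodular G) (hGnn : ∀ S, 0 ≤ G S) {S S' : Set α} (hSS : S ⊆ S')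
    {T T' : Set β} (hT : G (LLev S T) = FF G S) (hT' : G (LLev S' T') = FF G S') :
    G (LLev S (T ∩ T')) = FF G S := by
  have h := hG (LLev S T) (LLev S' T')
  rw [LLev_union, LLev_inter, Set.union_eq_self_of_subset_left hSS,
    Set.inter_eq_self_of_subset_left hSS] at h
  have h1 := FF_le G hGnn S' (T ∪ T')
  have h2 := FF_le G hGnn S (T ∩ T')
  rw [hT, hT'] at h
  linarith

/-- The minimal minimizer of `T ↦ G(S ∪ T)`. -/
noncomputable def tauF (S : Set α) : Set β := (mzF G S).inf' (mzF_nonempty G S) id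

lemma tauF_mem (hG : Submodular G) (hGnn : ∀ S, 0 ≤ G S) (S : Set α) :
    G (LLev S (tauF G S)) = FF G S := by
  have := Finset.inf'_mem (s := {T : Set β | G (LLev S T) = FF G S})
    (fun T hT T' hT' => inter_mem_mz G hG hGnn (subset_refl S) hT hT')
    (mzF G S) (mzF_nonempty G S) id
    (fun T hT => by
      simpa only [mzF, Finset.mem_filter, Finset.mem_univ, true_and, id, Set.mem_setOf_eq] using hT)
  exact this

lemma tauF_min (hG : Submodular G) (hGnn : ∀ S, 0 ≤ G S) {S : Set α} {T : Set β}
    (hT : G (LLev S T) = FF G S) : tauF G S ⊆ T :=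
  Finset.inf'_le id (by simp only [mzF, Finset.mem_filter, Finset.mem_univ, true_and]; exact hT)

/-- Monotonicity of minimal minimizers, via submodularity. -/
lemma tauF_mono (hG : Submodular G) (hGnn : ∀ S, 0 ≤ G S) {S S' : Set α} (h : S ⊆ S') :
    tauF G S ⊆ tauF G S' := by
  have hmem := inter_mem_mz G hG hGnn h (tauF_mem G hG hGnn S) (tauF_mem G hG hGnn S')
  have hsub := tauF_min G hG hGnn hmem
  exact fun j hj => (hsub hj).2

lemma hFuniv (hGnn : ∀ S, 0 ≤ G S) (hGV : G Set.univ = 0) : FF G (Set.univ : Set α) = 0 := by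
  refine le_antisymm ?_ (FF_nonneg G hGnn _)
  have := FF_le G hGnn (Set.univ : Set α) (Set.univ : Set β)
  rwa [LLev_univ, hGV] at this

lemma hFempty (hmin : (⨅ T : Set β, G (Sum.inr '' T)) = 0) : FF G (∅ : Set α) = 0 := by
  have : FF G (∅ : Set α) = ⨅ T : Set β, G (Sum.inr '' T) := by
    unfold FF
    simp only [Set.image_empty, Set.empty_union]
  rw [this, hmin]

variable [Nonempty α]

/-- `f(x) ≤ g(x, x̄)` for every `x̄`. -/
lemma part1 (hGnn : ∀ S, 0 ≤ G S) (hGV : G Set.univ = 0)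
    (hmin : (⨅ T : Set β, G (Sum.inr '' T)) = 0) (x : α → ℝ) (xb : β → ℝ) :
    lovasz (FF G) x ≤ lovasz G (Sum.elim x xb) := by
  set a := ⨅ i, x i with ha
  set b := ⨆ i, x i with hb
  set m := ⨅ i, Sum.elim x xb i with hm
  set M := ⨆ i, Sum.elim x xb i with hM
  have hma : m ≤ a :=
    le_ciInf fun i => by exact ciInf_le (Finite.bddBelow_range (Sum.elim x xb)) (Sum.inl i)
  have hbM : b ≤ M :=
    ciSup_le fun i => by exact le_ciSup (Finite.bddAbove_range (Sum.elim x xb)) (Sum.inl i)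
  have hsub : Set.Ioc a b ⊆ Set.Ioc m M := Set.Ioc_subset_Ioc hma hbM
  unfold lovasz
  rw [← ha, ← hb, ← hm, ← hM, hFuniv G hGnn hGV, hGV, mul_zero, mul_zero, zero_add, zero_add]
  calc ∫ t in Set.Ioc a b, FF G {i | t < x i}
      = ∫ t in Set.Ioc m M, (Set.Ioc a b).indicator (fun t => FF G {i | t < x i}) t := by
        rw [MeasureTheory.setIntegral_indicator measurableSet_Ioc,
          Set.inter_eq_self_of_subset_right hsub]
    _ = ∫ t in Set.Ioc m M, FF G {i | t < x i} := by
        apply MeasureTheory.setIntegral_congr_ae measurableSet_Ioc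
        have hae : ∀ᵐ t : ℝ, t ≠ a := by
          have h : (volume : Measure ℝ) {a} = 0 := measure_singleton a
          filter_upwards [measure_eq_zero_iff_ae_notMem.mp h] with t ht using by simpa using ht
        filter_upwards [hae] with t hta _
        by_cases ht : t ∈ Set.Ioc a b
        · rw [Set.indicator_of_mem ht]
        · rw [Set.indicator_of_notMem ht]
          rcases not_and_or.mp (fun h => ht (Set.mem_Ioc.mpr h)) with h | h
          · have hlt : t < a := lt_of_le_of_ne (not_lt.mp h) hta
            have hU : {i | t < x i} = Set.univ := by
              ext i
              simp only [Set.mem_setOf_eq, Set.mem_univ, iff_true]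
              exact lt_of_lt_of_le hlt (ciInf_le (Finite.bddBelow_range x) i)
            rw [hU]
            exact (hFuniv G hGnn hGV).symm
          · have hE : {i | t < x i} = ∅ := by
              ext i
              simp only [Set.mem_setOf_eq, Set.mem_empty_iff_false, iff_false, not_lt]
              exact le_trans (le_ciSup (Finite.bddAbove_range x) i) (le_of_lt (not_le.mp h))
            rw [hE]
            exact (hFempty G hmin).symm
    _ ≤ ∫ t in Set.Ioc m M, G {i | t < Sum.elim x xb i} := by
        apply MeasureTheory.setIntegral_mono_on (level_integrableOn (FF G) x m M)
          (level_integrableOn G (Sum.elim x xb) m M) measurableSet_Ioc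
        intro t _
        rw [level_elim]
        exact FF_le G hGnn _ _

/-- There is an `x̄` with `g(x, x̄) = f(x)`. -/
lemma part2 (hG : Submodular G) (hGnn : ∀ S, 0 ≤ G S)
    (hGV : G Set.univ = 0) (x : α → ℝ) :
    ∃ xb : β → ℝ, lovasz G (Sum.elim x xb) = lovasz (FF G) x := by
  obtain ⟨i0, hi0⟩ := exists_eq_ciInf_of_finite (f := x)
  obtain ⟨i1, hi1⟩ := exists_eq_ciSup_of_finite (f := x)
  set a := ⨅ i, x i with ha
  set b := ⨆ i, x i with hb
  have hax : ∀ i, a ≤ x i := fun i => ciInf_le (Finite.bddBelow_range x) i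
  have hxble : ∀ i, x i ≤ b := fun i => le_ciSup (Finite.bddAbove_range x) i
  have hab : a ≤ b := le_trans (hax i1) (hxble i1)
  set D : β → Set ℝ := fun j => insert a {t | t ∈ Set.Ioc a b ∧ j ∈ tauF G {i | t < x i}}
    with hD
  have hDne : ∀ j, (D j).Nonempty := fun j => ⟨a, Set.mem_insert _ _⟩
  have hDle : ∀ j, ∀ t ∈ D j, t ≤ b := by
    rintro j t (rfl | ⟨ht, _⟩)
    · exact hab
    · exact ht.2
  have hDbdd : ∀ j, BddAbove (D j) := fun j => ⟨b, fun t ht => hDle j t ht⟩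
  set xb : β → ℝ := fun j => sSup (D j) with hxb
  have hxba : ∀ j, a ≤ xb j := fun j => le_csSup (hDbdd j) (Set.mem_insert _ _)
  have hxbb : ∀ j, xb j ≤ b := fun j => csSup_le (hDne j) (hDle j)
  refine ⟨xb, ?_⟩
  have hm : (⨅ i, Sum.elim x xb i) = a := by
    refine le_antisymm ?_ (le_ciInf ?_)
    · have := ciInf_le (Finite.bddBelow_range (Sum.elim x xb)) (Sum.inl i0)
      simpa [hi0] using this
    · rintro (i | j)
      · exact hax i
      · exact hxba j
  have hM : (⨆ i, Sum.elim x xb i) = b := by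
    refine le_antisymm (ciSup_le ?_) ?_
    · rintro (i | j)
      · exact hxble i
      · exact hxbb j
    · have := le_ciSup (Finite.bddAbove_range (Sum.elim x xb)) (Sum.inl i1)
      simpa [hi1] using this
  unfold lovasz
  rw [hm, hM, ← ha, ← hb, hFuniv G hGnn hGV, hGV, mul_zero, zero_add, zero_add]
  apply MeasureTheory.setIntegral_congr_ae measurableSet_Ioc
  have hcz : ∀ᵐ t : ℝ, t ∉ Set.range x :=
    measure_eq_zero_iff_ae_notMem.mp ((Set.finite_range x).countable.measure_zero _)
  filter_upwards [hcz] with t htr ht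
  have hTt : {j | t < xb j} = tauF G {i | t < x i} := by
    apply Set.Subset.antisymm
    · intro j hj
      obtain ⟨s, hs, hts⟩ := exists_lt_of_lt_csSup (hDne j) hj
      rcases hs with rfl | ⟨hs1, hs2⟩
      · exact absurd hts (not_lt.mpr ht.1.le)
      · exact tauF_mono G hG hGnn (fun i (hi : s < x i) => lt_trans hts hi) hs2
    · intro j hj
      have htb : t < b := lt_of_le_of_ne ht.2 (fun h => htr ⟨i1, by rw [hi1, ← h]⟩)
      set s : Finset α := Finset.univ.filter (fun i => t < x i) with hsdef
      have hi1s : i1 ∈ s := by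
        simp only [hsdef, Finset.mem_filter, Finset.mem_univ, true_and]
        rw [hi1]
        exact htb
      have hsne : s.Nonempty := ⟨i1, hi1s⟩
      set v := s.inf' hsne x with hv
      obtain ⟨iv, hiv, hive⟩ := Finset.exists_mem_eq_inf' hsne x
      have htv : t < v := by
        rw [hv, hive]
        exact (Finset.mem_filter.mp hiv).2
      have hvb : v ≤ b := by rw [hv, hive]; exact hxble iv
      set s' := (t + v) / 2 with hs'
      have h1 : t < s' := by rw [hs']; linarith
      have h2 : s' < v := by rw [hs']; linarith
      have hlevel : {i | s' < x i} = {i | t < x i} := by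
        ext i
        simp only [Set.mem_setOf_eq]
        constructor
        · exact fun h => lt_trans h1 h
        · intro h
          refine lt_of_lt_of_le h2 (Finset.inf'_le x ?_)
          simp only [hsdef, Finset.mem_filter, Finset.mem_univ, true_and]
          exact h
      have hmem : s' ∈ D j := Set.mem_insert_of_mem _
        ⟨⟨lt_trans ht.1 h1, le_trans h2.le hvb⟩, by rw [hlevel]; exact hj⟩
      exact lt_of_lt_of_le h1 (le_csSup (hDbdd j) hmem)
  rw [level_elim, hTt, tauF_mem G hG hGnn]

end Aux

/-- If moreover `G` is non-negative with `G(V ∪ V̄) = 0`, then the Lovász extension of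
`F(S) = min_{T ⊆ V̄} G(S ∪ T)` satisfies `f(x) = min_{x̄ ∈ ℝ^M} g(x, x̄)` for all `x ∈ ℝ^N`. -/
theorem stmt_9 {α β : Type*} [Fintype α] [Fintype β] [Nonempty α] (G : Set (α ⊕ β) → ℝ)
    (hG : Submodular G) (hGnn : ∀ S, 0 ≤ G S) (hG0 : G ∅ = 0) (hGV : G Set.univ = 0)
    (hmin : (⨅ T : Set β, G (Sum.inr '' T)) = 0)
    (x : α → ℝ) :
    lovasz (fun S : Set α => ⨅ T : Set β, G (Sum.inl '' S ∪ Sum.inr '' T)) x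
      = ⨅ xb : β → ℝ, lovasz G (Sum.elim x xb) := by
  have hub : ∀ xb : β → ℝ, lovasz (FF G) x ≤ lovasz G (Sum.elim x xb) :=
    fun xb => part1 G hGnn hGV hmin x xb
  obtain ⟨xb0, hxb0⟩ := part2 G hG hGnn hGV x
  show lovasz (FF G) x = ⨅ xb : β → ℝ, lovasz G (Sum.elim x xb)
  refine le_antisymm (le_ciInf hub) ?_
  have h1 : (⨅ xb : β → ℝ, lovasz G (Sum.elim x xb)) ≤ lovasz G (Sum.elim x xb0) :=
    ciInf_le ⟨lovasz (FF G) x, by rintro _ ⟨xb, rfl⟩; exact hub xb⟩ xb0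
  exact h1.trans_eq hxb0
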